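/- Let X be a Tychonoff space. Then the free topological vector space V(X) is a Lindelöf space if and only if the finite power Xⁿ is Lindelöf for every n ∈ ℕ. -/

import Mathlib

open Topology Set

universe u v w

/-- `IsFreeTVS V i` says that the (real) topological vector space `V` together with the
continuous map `i : X → V` is the free topological vector space over `X`: every continuous
map from `X` to a topological vector space `E` extends uniquely to a continuous linear
operator `V →L[ℝ] E`. -/
def IsFreeTVS {X : Type u} [TopologicalSpace X] (V : Type v) [AddCommGroup V] [Module ℝ V]
    [TopologicalSpace V] [IsTopologicalAddGroup V] [ContinuousSMul ℝ V] (i : X → V) : Prop :=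
  Continuous i ∧
    ∀ (E : Type w) [AddCommGroup E] [Module ℝ E] [TopologicalSpace E]
      [IsTopologicalAddGroup E] [ContinuousSMul ℝ E] (f : X → E),
      Continuous f → ∃! g : V →L[ℝ] E, ∀ x, g (i x) = f x

/-- `ℝ` with the indiscrete topology, in an arbitrary universe. -/
def TrivReal : Type w := ULift.{w} ℝ

noncomputable instance : AddCommGroup TrivReal.{w} := inferInstanceAs (AddCommGroup (ULift ℝ))
noncomputable instance : Module ℝ TrivReal.{w} := inferInstanceAs (Module ℝ (ULift ℝ))
instance : TopologicalSpace TrivReal.{w} := ⊤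
instance : ContinuousAdd TrivReal.{w} := ⟨continuous_top⟩
instance : ContinuousNeg TrivReal.{w} := ⟨continuous_top⟩
instance : IsTopologicalAddGroup TrivReal.{w} := {}
instance : ContinuousSMul ℝ TrivReal.{w} := ⟨continuous_top⟩

noncomputable instance : ContinuousSMul ℝ (ULift.{w} ℝ) :=
  ⟨continuous_uliftUp.comp ((continuous_fst.smul (continuous_uliftDown.comp continuous_snd)))⟩

theorem span_range_eq_top_of_isFreeTVS {X : Type u} [TopologicalSpace X]
    {V : Type v} [AddCommGroup V] [Module ℝ V] [TopologicalSpace V]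
    [IsTopologicalAddGroup V] [ContinuousSMul ℝ V] {i : X → V}
    (hV : IsFreeTVS.{u, v, w} V i) : Submodule.span ℝ (Set.range i) = ⊤ := by
  by_contra h
  set W := Submodule.span ℝ (Set.range i) with hW
  obtain ⟨v, hv⟩ : ∃ v : V, v ∉ W := by
    by_contra hc
    push_neg at hc
    exact h (Submodule.eq_top_iff'.mpr hc)
  have hπ : (Submodule.Quotient.mk v : V ⧸ W) ≠ 0 := by
    simpa [Submodule.Quotient.mk_eq_zero] using hv
  obtain ⟨φ, hφ⟩ : ∃ φ : Module.Dual ℝ (V ⧸ W), φ (Submodule.Quotient.mk v) ≠ 0 := by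
    by_contra hc
    push_neg at hc
    exact hπ ((Module.forall_dual_apply_eq_zero_iff ℝ _).mp hc)
  obtain ⟨g, -, hgu⟩ := hV.2 TrivReal.{w} (fun _ => 0) continuous_const
  have h1 : (0 : V →L[ℝ] TrivReal.{w}) = g := hgu 0 (fun x => rfl)
  set ℓ : V →ₗ[ℝ] TrivReal.{w} :=
    (ULift.moduleEquiv.symm.toLinearMap).comp (φ.comp W.mkQ) with hℓ
  have h2 : ({ toLinearMap := ℓ, cont := continuous_top } : V →L[ℝ] TrivReal.{w}) = g := by
    refine hgu _ (fun x => ?_)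
    have : (i x : V) ∈ W := Submodule.subset_span (Set.mem_range_self x)
    have hz : W.mkQ (i x) = 0 := by
      simpa [Submodule.mkQ_apply, Submodule.Quotient.mk_eq_zero] using this
    show ULift.moduleEquiv.symm (φ (W.mkQ (i x))) = 0
    rw [hz, map_zero, map_zero]
  have h3 := h2.trans h1.symm
  have h4 : ℓ v = 0 := by
    have := congrArg (fun (g : V →L[ℝ] TrivReal.{w}) => g v) h3
    simpa using this
  apply hφ
  have h5 : φ (W.mkQ v) = 0 := congrArg ULift.down h4
  exact h5

theorem lindelofSpace_prod_of_compactSpace {K : Type*} {Y : Type*} [TopologicalSpace K]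
    [TopologicalSpace Y] [CompactSpace K] [LindelofSpace Y] : LindelofSpace (K × Y) := by
  rw [← isLindelof_univ_iff]
  apply isLindelof_of_countable_subcover
  intro ι U hUo hcov
  have key : ∀ y : Y, ∃ (F : Finset ι) (Vy : Set Y), IsOpen Vy ∧ y ∈ Vy ∧
      (univ : Set K) ×ˢ Vy ⊆ ⋃ i ∈ F, U i := by
    intro y
    have hK : IsCompact ((univ : Set K) ×ˢ ({y} : Set Y)) :=
      isCompact_univ.prod isCompact_singleton
    obtain ⟨F, hF⟩ := hK.elim_finite_subcover U hUo (fun p _ => hcov (mem_univ p))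
    obtain ⟨s', t', hs'o, ht'o, hs', ht', hsub⟩ :=
      generalized_tube_lemma isCompact_univ isCompact_singleton
        (isOpen_biUnion fun i _ => hUo i) hF
    exact ⟨F, t', ht'o, ht' rfl, fun p hp => hsub ⟨hs' hp.1, hp.2⟩⟩
  choose F Vy hVo hVmem hVsub using key
  obtain ⟨r, hrc, hrcov⟩ := (isLindelof_univ (X := Y)).elim_countable_subcover Vy hVo
    (fun y _ => mem_iUnion.2 ⟨y, hVmem y⟩)
  refine ⟨⋃ y ∈ r, (F y : Set ι), hrc.biUnion (fun y _ => (F y).countable_toSet), ?_⟩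
  rintro ⟨k, y⟩ -
  obtain ⟨y', hy', hyV⟩ := mem_iUnion₂.1 (hrcov (mem_univ y))
  obtain ⟨i, hi, hp⟩ := mem_iUnion₂.1 (hVsub y' (show (k, y) ∈ (univ : Set K) ×ˢ Vy y' from ⟨mem_univ k, hyV⟩))
  exact mem_iUnion₂.2 ⟨i, mem_iUnion₂.2 ⟨y', hy', hi⟩, hp⟩

/-- `SPn i n` is the set `SP_n(X) = {λ₁x₁ + ⋯ + λₙxₙ : λᵢ ∈ [−n,n], xᵢ ∈ X}` inside `V`. -/
def SPn {X : Type u} {V : Type v} [AddCommGroup V] [Module ℝ V]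
    (i : X → V) (n : ℕ) : Set V :=
  {v | ∃ (c : Fin n → ℝ) (x : Fin n → X),
    (∀ j, c j ∈ Set.Icc (-(n : ℝ)) (n : ℝ)) ∧ v = ∑ j, c j • i (x j)}

theorem mem_iUnion_SPn {X : Type u} [TopologicalSpace X]
    {V : Type v} [AddCommGroup V] [Module ℝ V] [TopologicalSpace V]
    [IsTopologicalAddGroup V] [ContinuousSMul ℝ V] {i : X → V}
    (hV : IsFreeTVS.{u, v, w} V i) (v : V) : ∃ n : ℕ, v ∈ SPn i n := by
  classical
  have hv : v ∈ Submodule.span ℝ (Set.range i) := by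
    rw [span_range_eq_top_of_isFreeTVS hV]; exact Submodule.mem_top
  obtain ⟨m, c, z, hz⟩ := Submodule.mem_span_set'.mp hv
  choose x hx using fun k => (z k).2
  have hv' : v = ∑ k, c k • i (x k) := by
    rw [← hz]
    exact Finset.sum_congr rfl fun k _ => by rw [hx k]
  rcases Nat.eq_zero_or_pos m with hm | hm
  · subst hm
    refine ⟨0, Fin.elim0, Fin.elim0, fun j => j.elim0, ?_⟩
    rw [hv']
    simp
  · set N := m + Finset.univ.sup (fun k : Fin m => ⌈|c k|⌉₊) with hN
    have hmN : m ≤ N := Nat.le_add_right _ _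
    have hcN : ∀ k : Fin m, |c k| ≤ (N : ℝ) := by
      intro k
      calc |c k| ≤ (⌈|c k|⌉₊ : ℝ) := Nat.le_ceil _
        _ ≤ (N : ℝ) := by
          have h1 : ⌈|c k|⌉₊ ≤ N := by
            have h2 : ⌈|c k|⌉₊ ≤ Finset.univ.sup (fun k : Fin m => ⌈|c k|⌉₊) :=
              Finset.le_sup (f := fun k : Fin m => ⌈|c k|⌉₊) (Finset.mem_univ k)
            omega
          exact_mod_cast h1
    refine ⟨N, (fun j => if h : (j : ℕ) < m then c ⟨j, h⟩ else 0),
      (fun j => if h : (j : ℕ) < m then x ⟨j, h⟩ else x ⟨0, hm⟩), fun j => ?_, ?_⟩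
    · by_cases h : (j : ℕ) < m
      · simp only [dif_pos h]
        have := hcN ⟨j, h⟩
        rw [abs_le] at this
        exact ⟨this.1, this.2⟩
      · simp only [dif_neg h]
        constructor
        · simp only [neg_nonpos]; positivity
        · positivity
    · rw [hv']
      set g : ℕ → V := fun t => if h : t < m then c ⟨t, h⟩ • i (x ⟨t, h⟩) else 0 with hg
      have h1 : ∀ j : Fin N,
          (if h : (j : ℕ) < m then c ⟨j, h⟩ else 0) •
            i (if h : (j : ℕ) < m then x ⟨j, h⟩ else x ⟨0, hm⟩) = g (j : ℕ) := by
        intro j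
        by_cases h : (j : ℕ) < m
        · simp [hg, h]
        · simp [hg, h]
      rw [Finset.sum_congr rfl (fun j _ => h1 j)]
      rw [Fin.sum_univ_eq_sum_range g N]
      rw [← Finset.sum_subset (Finset.range_subset_range.mpr hmN)
        (fun t _ ht => by simp [hg, by simpa using ht])]
      rw [← Fin.sum_univ_eq_sum_range g m]
      exact Finset.sum_congr rfl fun k _ => by simp [hg, k.isLt]

theorem lindelofSpace_of_pow_lindelof {X : Type u} [TopologicalSpace X]
    {V : Type v} [AddCommGroup V] [Module ℝ V] [TopologicalSpace V]
    [IsTopologicalAddGroup V] [ContinuousSMul ℝ V] {i : X → V}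
    (hV : IsFreeTVS.{u, v, w} V i) (h : ∀ n : ℕ, LindelofSpace (Fin n → X)) :
    LindelofSpace V := by
  have hSP : ∀ n : ℕ, IsLindelof (SPn i n) := by
    intro n
    haveI := h n
    haveI : LindelofSpace ((Fin n → Icc (-(n : ℝ)) (n : ℝ)) × (Fin n → X)) :=
      lindelofSpace_prod_of_compactSpace
    set F : (Fin n → Icc (-(n : ℝ)) (n : ℝ)) × (Fin n → X) → V :=
      fun p => ∑ j, (p.1 j : ℝ) • i (p.2 j) with hF
    have hFc : Continuous F := by
      apply continuous_finset_sum
      intro j _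
      exact (continuous_subtype_val.comp ((continuous_apply j).comp continuous_fst)).smul
        (hV.1.comp ((continuous_apply j).comp continuous_snd))
    have hFr : SPn i n = F '' univ := by
      ext v
      constructor
      · rintro ⟨c, x, hc, rfl⟩
        exact ⟨(fun j => ⟨c j, hc j⟩, x), mem_univ _, rfl⟩
      · rintro ⟨⟨cc, x⟩, -, rfl⟩
        exact ⟨fun j => (cc j : ℝ), x, fun j => (cc j).2, rfl⟩
    rw [hFr]
    exact isLindelof_univ.image hFc
  have huniv : (univ : Set V) = ⋃ n : ℕ, SPn i n := by
    apply Subset.antisymm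
    · intro v _
      obtain ⟨n, hn⟩ := mem_iUnion_SPn hV v
      exact mem_iUnion.2 ⟨n, hn⟩
    · exact subset_univ _
  rw [← isLindelof_univ_iff, huniv]
  exact isLindelof_iUnion hSP

theorem isInducing_stoneCechUnit' {X : Type u} [TopologicalSpace X] [T35Space X] :
    Topology.IsInducing (stoneCechUnit : X → StoneCech X) := by
  rw [isInducing_iff_nhds]
  intro x
  refine le_antisymm (Filter.tendsto_iff_comap.mp (continuous_stoneCechUnit.tendsto x)) ?_
  intro s hs
  obtain ⟨U, hUs, hUo, hxU⟩ := mem_nhds_iff.mp hs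
  obtain ⟨f, hfc, hfx, hfU⟩ :=
    CompletelyRegularSpace.completely_regular x Uᶜ hUo.isClosed_compl (by simpa using hxU)
  have hFu : stoneCechExtend hfc ∘ stoneCechUnit = f := stoneCechExtend_extends hfc
  refine Filter.mem_comap.mpr ⟨stoneCechExtend hfc ⁻¹' ({(1 : unitInterval)}ᶜ), ?_, ?_⟩
  · apply IsOpen.mem_nhds ((isOpen_compl_singleton).preimage (continuous_stoneCechExtend hfc))
    have h1 : stoneCechExtend hfc (stoneCechUnit x) = f x := congrFun hFu x
    simp only [mem_preimage, mem_compl_iff, mem_singleton_iff, h1, hfx]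
    intro hc
    exact zero_ne_one (α := ℝ) (congrArg Subtype.val hc)
  · intro y hy
    simp only [mem_preimage, mem_compl_iff, mem_singleton_iff] at hy
    have hFy : stoneCechExtend hfc (stoneCechUnit y) = f y := congrFun hFu y
    by_contra hyU
    have hyc : y ∈ Uᶜ := fun hyU' => hyU (hUs hyU')
    exact hy (by rw [hFy, hfU hyc]; rfl)

theorem isInducing_piMap {ι : Type*} {A : ι → Type*} {B : ι → Type*}
    [∀ i, TopologicalSpace (A i)] [∀ i, TopologicalSpace (B i)] {f : ∀ i, A i → B i}
    (hf : ∀ i, Topology.IsInducing (f i)) :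
    Topology.IsInducing (fun (a : ∀ i, A i) (i : ι) => f i (a i)) := by
  rw [isInducing_iff_nhds]
  intro a
  rw [nhds_pi, nhds_pi, Filter.pi, Filter.pi, Filter.comap_iInf]
  refine iInf_congr fun i => ?_
  rw [Filter.comap_comap, (hf i).nhds_eq_comap (a i), Filter.comap_comap]
  rfl

lemma sum_three_pow_lt (n : ℕ) : (∑ j ∈ Finset.range n, 3 ^ j) < 3 ^ n := by
  induction n with
  | zero => simp
  | succ n ih =>
    rw [Finset.sum_range_succ, pow_succ]
    have h3 : 0 < 3 ^ n := Nat.pow_pos (by norm_num)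
    omega

lemma three_pow_finset_inj_nat : ∀ (n : ℕ) (A B : Finset ℕ), A ⊆ Finset.range n →
    B ⊆ Finset.range n → (∑ j ∈ A, 3 ^ j) = (∑ j ∈ B, 3 ^ j) → A = B := by
  intro n
  induction n with
  | zero =>
    intro A B hA hB _
    rw [Finset.range_zero, Finset.subset_empty] at hA hB
    rw [hA, hB]
  | succ n ih =>
    intro A B hA hB hsum
    have hsubA : ∀ (C : Finset ℕ), C ⊆ Finset.range (n+1) → n ∉ C → C ⊆ Finset.range n := by
      intro C hC hn t ht
      have := hC ht
      rw [Finset.mem_range] at this ⊢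
      rcases Nat.lt_succ_iff_lt_or_eq.mp this with h | h
      · exact h
      · exact absurd (h ▸ ht) hn
    have hbig : ∀ (C : Finset ℕ), C ⊆ Finset.range n → (∑ j ∈ C, 3 ^ j) < 3 ^ n := by
      intro C hC
      calc (∑ j ∈ C, 3 ^ j) ≤ ∑ j ∈ Finset.range n, 3 ^ j :=
            Finset.sum_le_sum_of_subset hC
        _ < 3 ^ n := sum_three_pow_lt n
    by_cases hnA : n ∈ A <;> by_cases hnB : n ∈ B
    · have hA' : A.erase n ⊆ Finset.range n :=
        hsubA _ (le_trans (Finset.erase_subset n A) hA) (Finset.notMem_erase n A)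
      have hB' : B.erase n ⊆ Finset.range n :=
        hsubA _ (le_trans (Finset.erase_subset n B) hB) (Finset.notMem_erase n B)
      have hsA : ∑ j ∈ A.erase n, (3:ℕ) ^ j + 3 ^ n = ∑ j ∈ A, (3:ℕ) ^ j :=
        Finset.sum_erase_add A _ hnA
      have hsB : ∑ j ∈ B.erase n, (3:ℕ) ^ j + 3 ^ n = ∑ j ∈ B, (3:ℕ) ^ j :=
        Finset.sum_erase_add B _ hnB
      have herase : A.erase n = B.erase n := ih _ _ hA' hB' (by omega)
      ext t
      by_cases ht : t = n
      · subst ht; simp [hnA, hnB]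
      · constructor
        · intro h
          have h2 : t ∈ B.erase n := herase ▸ Finset.mem_erase.mpr ⟨ht, h⟩
          exact (Finset.mem_erase.mp h2).2
        · intro h
          have h2 : t ∈ A.erase n := herase.symm ▸ Finset.mem_erase.mpr ⟨ht, h⟩
          exact (Finset.mem_erase.mp h2).2
    · exfalso
      have h1 : 3 ^ n ≤ ∑ j ∈ A, 3 ^ j := Finset.single_le_sum (fun j _ => Nat.zero_le _) hnA
      have h2 := hbig B (hsubA B hB hnB)
      omega
    · exfalso
      have h1 : 3 ^ n ≤ ∑ j ∈ B, 3 ^ j := Finset.single_le_sum (fun j _ => Nat.zero_le _) hnB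
      have h2 := hbig A (hsubA A hA hnA)
      omega
    · exact ih A B (hsubA A hA hnA) (hsubA B hB hnB) hsum

lemma three_pow_finset_inj_real {n : ℕ} (A B : Finset (Fin n))
    (h : ∑ j ∈ A, (3 : ℝ) ^ (j : ℕ) = ∑ j ∈ B, (3 : ℝ) ^ (j : ℕ)) : A = B := by
  have hnat : ∑ j ∈ A, (3 : ℕ) ^ (j : ℕ) = ∑ j ∈ B, (3 : ℕ) ^ (j : ℕ) := by
    exact_mod_cast h
  have hval : Finset.image Fin.val A = Finset.image Fin.val B := by
    apply three_pow_finset_inj_nat n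
    · intro t ht
      obtain ⟨j, -, rfl⟩ := Finset.mem_image.mp ht
      exact Finset.mem_range.mpr j.isLt
    · intro t ht
      obtain ⟨j, -, rfl⟩ := Finset.mem_image.mp ht
      exact Finset.mem_range.mpr j.isLt
    · rw [Finset.sum_image (fun a _ b _ h => Fin.val_injective h),
        Finset.sum_image (fun a _ b _ h => Fin.val_injective h)]
      exact hnat
  exact Finset.image_injective Fin.val_injective hval

lemma sum_smul_fiberwise {ι β M : Type*} [DecidableEq β] [AddCommGroup M] [Module ℝ M]
    [Fintype ι] (c : ι → ℝ) (p : ι → β) (h : β → M) (P : Finset β) (hp : ∀ k, p k ∈ P) :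
    ∑ k, c k • h (p k) =
      ∑ q ∈ P, (∑ k ∈ Finset.univ.filter (fun k => p k = q), c k) • h q := by
  rw [← Finset.sum_fiberwise_of_maps_to (fun k _ => hp k) (fun k => c k • h (p k))]
  refine Finset.sum_congr rfl fun q hq => ?_
  rw [Finset.sum_smul]
  exact Finset.sum_congr rfl fun k hk => by rw [(Finset.mem_filter.mp hk).2]

lemma coeff_eq_of_sum_eq {β E : Type*} [AddCommGroup E] [Module ℝ E] [DecidableEq β]
    {e : β → E} (he : LinearIndependent ℝ e) {m m' : ℕ} (c : Fin m → ℝ) (p : Fin m → β)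
    (c' : Fin m' → ℝ) (p' : Fin m' → β)
    (hsum : ∑ k, c k • e (p k) = ∑ k, c' k • e (p' k)) (q : β) :
    ∑ k ∈ Finset.univ.filter (fun k => p k = q), c k =
      ∑ k ∈ Finset.univ.filter (fun k => p' k = q), c' k := by
  classical
  set P : Finset β := (Finset.univ.image p ∪ Finset.univ.image p') ∪ {q} with hP
  have hp : ∀ k, p k ∈ P := fun k => by
    simp [hP, Finset.mem_union, Finset.mem_image]
  have hp' : ∀ k, p' k ∈ P := fun k => by
    simp [hP, Finset.mem_union, Finset.mem_image]
  have hq : q ∈ P := by simp [hP]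
  have h1 := sum_smul_fiberwise c p e P hp
  have h2 := sum_smul_fiberwise c' p' e P hp'
  have h0 : ∑ r ∈ P, ((∑ k ∈ Finset.univ.filter (fun k => p k = r), c k) -
      (∑ k ∈ Finset.univ.filter (fun k => p' k = r), c' k)) • e r = 0 := by
    simp only [sub_smul, Finset.sum_sub_distrib, ← h1, ← h2, hsum, sub_self]
  have := linearIndependent_iff'.mp he P _ h0 q hq
  linarith [this]

theorem pow_lindelof_of_isFreeTVS {X : Type u} [TopologicalSpace X] [T35Space X]
    {V : Type v} [AddCommGroup V] [Module ℝ V] [TopologicalSpace V]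
    [IsTopologicalAddGroup V] [ContinuousSMul ℝ V] {i : X → V}
    (hV : IsFreeTVS.{u, v, w} V i) (hL : LindelofSpace V) (n : ℕ) :
    LindelofSpace (Fin n → X) := by
  classical
  haveI := hL
  -- the evaluation map into a big product space
  set E := (ContinuousMap (StoneCech X) ℝ) → ℝ with hE
  set e : StoneCech X → E := fun y f => f y with he
  have he_cont : Continuous e := continuous_pi fun f => f.continuous
  have he_li : LinearIndependent ℝ e := by
    rw [linearIndependent_iff']
    intro s g hsum p hp
    have hcl : IsClosed ((s.erase p : Finset (StoneCech X)) : Set (StoneCech X)) :=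
      (s.erase p).finite_toSet.isClosed
    have hdis : Disjoint ((s.erase p : Finset (StoneCech X)) : Set (StoneCech X))
        ({p} : Set (StoneCech X)) := by
      rw [Set.disjoint_singleton_right]
      simp
    obtain ⟨f, hf0, hf1, -⟩ := exists_continuous_zero_one_of_isClosed hcl
      isClosed_singleton hdis
    have happ := congrFun hsum f
    have h1 : (∑ q ∈ s, g q • e q) f = ∑ q ∈ s, g q * f q := by
      rw [Finset.sum_apply]
      rfl
    have h2 : ∑ q ∈ s, g q * f q = g p := by
      rw [← Finset.sum_erase_add s _ hp]
      have hzz : ∀ q ∈ s.erase p, g q * f q = 0 := by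
        intro q hq
        have hq' : f q = 0 := hf0 (by simpa [and_comm] using hq)
        rw [hq', mul_zero]
      have hp1 : f p = 1 := hf1 (mem_singleton p)
      rw [Finset.sum_congr rfl hzz, Finset.sum_const_zero, zero_add, hp1, mul_one]
    rw [h1, h2] at happ
    exact happ
  -- functionals on V extending continuous real functions on X
  have hLam0 : ∀ f : X → ℝ, Continuous f → ∃ L : V →L[ℝ] ℝ, ∀ x, L (i x) = f x := by
    intro f hf
    obtain ⟨g, hg, -⟩ := hV.2 (ULift.{w} ℝ) (fun x => ULift.up (f x))
      (continuous_uliftUp.comp hf)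
    refine ⟨(ContinuousLinearEquiv.ulift (R₁ := ℝ) (M₁ := ℝ)).toContinuousLinearMap.comp g,
      fun x => ?_⟩
    have := hg x
    simp only [ContinuousLinearMap.comp_apply, this]
    rfl
  choose Lam hLam using fun (f : ContinuousMap (StoneCech X) ℝ) =>
    hLam0 (fun x => f (stoneCechUnit x)) (f.continuous.comp continuous_stoneCechUnit)
  -- the canonical linear map φ : V → E
  set φ : V →ₗ[ℝ] E := LinearMap.pi (fun f => (Lam f : V →ₗ[ℝ] ℝ)) with hφ
  have hφ_cont : Continuous φ := continuous_pi fun f => (Lam f).continuous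
  have hφ_i : ∀ x, φ (i x) = e (stoneCechUnit x) := by
    intro x
    funext f
    exact hLam f x
  -- representations
  have hrep : ∀ v : V, ∃ (m : ℕ) (c : Fin m → ℝ) (x : Fin m → X),
      v = ∑ k, c k • i (x k) := by
    intro v
    have hv : v ∈ Submodule.span ℝ (Set.range i) := by
      rw [span_range_eq_top_of_isFreeTVS hV]; exact Submodule.mem_top
    obtain ⟨m, c, z, hz⟩ := Submodule.mem_span_set'.mp hv
    choose x hx using fun k => (z k).2
    exact ⟨m, c, x, by rw [← hz]; exact (Finset.sum_congr rfl fun k _ => by rw [hx k]).symm⟩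
  have hφ_rep : ∀ (m : ℕ) (c : Fin m → ℝ) (x : Fin m → X),
      φ (∑ k, c k • i (x k)) = ∑ k, c k • e (stoneCechUnit (x k)) := by
    intro m c x
    rw [map_sum]
    exact Finset.sum_congr rfl fun k _ => by rw [map_smul, hφ_i]
  -- injectivity of φ
  have hφ_inj : Function.Injective φ := by
    have hker : ∀ wv : V, φ wv = 0 → wv = 0 := by
      intro wv h0
      obtain ⟨m, c, x, rfl⟩ := hrep wv
      have hsum : ∑ k, c k • e (stoneCechUnit (x k)) =
          ∑ k : Fin 0, (0 : ℝ) • e (Fin.elim0 k) := by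
        rw [← hφ_rep m c x, h0]
        simp
      have hco := coeff_eq_of_sum_eq he_li c (fun k => stoneCechUnit (x k))
        (fun _ => (0 : ℝ)) Fin.elim0 hsum
      have hz : ∀ q : X, ∑ k ∈ Finset.univ.filter (fun k => x k = q), c k = 0 := by
        intro q
        have h1 := hco (stoneCechUnit q)
        have h2 : Finset.univ.filter (fun k : Fin m => stoneCechUnit (x k) = stoneCechUnit q)
            = Finset.univ.filter (fun k => x k = q) := by
          apply Finset.filter_congr
          intro k _
          exact ⟨fun h => injective_stoneCechUnit_of_t35Space h, fun h => congrArg _ h⟩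
        rw [h2] at h1
        simpa using h1
      rw [sum_smul_fiberwise c x i (Finset.univ.image x)
        (fun k => Finset.mem_image_of_mem x (Finset.mem_univ k))]
      apply Finset.sum_eq_zero
      intro q hq
      obtain ⟨k, -, rfl⟩ := Finset.mem_image.mp hq
      rw [hz (x k), zero_smul]
    intro a b hab
    have h1 : φ (a - b) = 0 := by rw [map_sub, hab, sub_self]
    exact sub_eq_zero.mp (hker _ h1)
  -- the three maps
  set Un : (Fin n → X) → (Fin n → StoneCech X) := fun x k => stoneCechUnit (x k) with hUn
  set J : (Fin n → StoneCech X) → E := fun y => ∑ j : Fin n, (3 : ℝ) ^ (j : ℕ) • e (y j) with hJ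
  set jm : (Fin n → X) → V := fun x => ∑ j : Fin n, (3 : ℝ) ^ (j : ℕ) • i (x j) with hjm
  have hJ_cont : Continuous J := by
    apply continuous_finset_sum
    intro j _
    exact (he_cont.comp (continuous_apply (A := fun _ : Fin n => StoneCech X) j)).const_smul ((3 : ℝ) ^ (j : ℕ))
  have hjm_cont : Continuous jm := by
    apply continuous_finset_sum
    intro j _
    exact (hV.1.comp (continuous_apply j)).const_smul _
  have hφjm : ∀ x, φ (jm x) = J (Un x) := by
    intro x
    rw [hjm, hJ]
    simp only
    rw [map_sum]
    exact Finset.sum_congr rfl fun j _ => by rw [map_smul, hφ_i]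
  -- J is injective
  have hJ_inj : Function.Injective J := by
    intro y y' hyy
    funext k
    have hco := coeff_eq_of_sum_eq he_li (fun j : Fin n => (3 : ℝ) ^ (j : ℕ)) y
      (fun j : Fin n => (3 : ℝ) ^ (j : ℕ)) y' hyy
    have hAB := three_pow_finset_inj_real
      (Finset.univ.filter (fun j => y j = y k)) (Finset.univ.filter (fun j => y' j = y k))
      (hco (y k))
    have hk : k ∈ Finset.univ.filter (fun j => y' j = y k) := by
      rw [← hAB]
      exact Finset.mem_filter.mpr ⟨Finset.mem_univ k, rfl⟩
    exact ((Finset.mem_filter.mp hk).2).symm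
  -- J is a closed embedding
  have hJ_emb : Topology.IsClosedEmbedding J := hJ_cont.isClosedEmbedding hJ_inj
  -- range jm is the preimage of range J
  have hrange : Set.range jm = ⇑φ ⁻¹' (Set.range J) := by
    apply Subset.antisymm
    · rintro _ ⟨x, rfl⟩
      exact ⟨Un x, (hφjm x).symm⟩
    · rintro v ⟨y, hy⟩
      obtain ⟨m, c, x, rfl⟩ := hrep v
      have hsum : ∑ j : Fin n, (3 : ℝ) ^ (j : ℕ) • e (y j) =
          ∑ k, c k • e (stoneCechUnit (x k)) := by
        rw [← hφ_rep m c x, ← hy, hJ]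
      have hco := coeff_eq_of_sum_eq he_li (fun j : Fin n => (3 : ℝ) ^ (j : ℕ)) y c
        (fun k => stoneCechUnit (x k)) hsum
      have hy_mem : ∀ j : Fin n, ∃ xj : X, stoneCechUnit xj = y j := by
        intro j
        by_contra hc
        push_neg at hc
        have h1 := hco (y j)
        have h2 : Finset.univ.filter (fun k : Fin m => stoneCechUnit (x k) = y j) = ∅ := by
          rw [Finset.filter_eq_empty_iff]
          exact fun k _ => hc (x k)
        rw [h2, Finset.sum_empty] at h1
        have hpos : 0 < ∑ k ∈ Finset.univ.filter (fun j' : Fin n => y j' = y j),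
            (3 : ℝ) ^ (k : ℕ) := by
          apply Finset.sum_pos (fun k _ => by positivity)
          exact ⟨j, Finset.mem_filter.mpr ⟨Finset.mem_univ j, rfl⟩⟩
        rw [h1] at hpos
        exact lt_irrefl 0 hpos
      choose x' hx' using hy_mem
      refine ⟨x', hφ_inj ?_⟩
      rw [hφjm x', ← hy]
      have hUny : Un x' = y := funext fun k => hx' k
      rw [hUny]
  have hclosed : IsClosed (Set.range jm) := by
    rw [hrange]
    exact hJ_emb.isClosed_range.preimage hφ_cont
  -- jm is inducing
  have hUn_ind : Topology.IsInducing Un := isInducing_piMap (fun _ => isInducing_stoneCechUnit')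
  have hcomp : ⇑φ ∘ jm = J ∘ Un := funext hφjm
  have hjm_ind : Topology.IsInducing jm := by
    apply Topology.IsInducing.of_comp hjm_cont hφ_cont
    rw [hcomp]
    exact hJ_emb.isInducing.comp hUn_ind
  -- conclude
  rw [← isLindelof_univ_iff]
  rw [hjm_ind.isLindelof_iff]
  rw [image_univ]
  exact isLindelof_univ.of_isClosed_subset hclosed (subset_univ _)

/-- If `X` is a Tychonoff space and `(V, i)` is the free topological vector
space over `X`, then `V` is Lindelöf if and only if every finite power `Xⁿ` is Lindelöf. -/
theorem lindelof_freeTVS_iff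
    {X : Type u} [TopologicalSpace X] [T35Space X]
    (V : Type v) [AddCommGroup V] [Module ℝ V] [TopologicalSpace V]
    [IsTopologicalAddGroup V] [ContinuousSMul ℝ V] (i : X → V)
    (hV : IsFreeTVS V i) :
    LindelofSpace V ↔ ∀ n : ℕ, LindelofSpace (Fin n → X) := by
  constructor
  · intro hL n
    exact pow_lindelof_of_isFreeTVS hV hL n
  · intro h
    exact lindelofSpace_of_pow_lindelof hV h
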